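/- Let G and H be finitely generated groups with G nontrivial, and let H act on a set X with finitely many orbits. If the wreath product G ≀_X H has property FW, then X is finite. -/

import Mathlib

/-- The group of finitely supported functions `X → G` (pointwise multiplication). -/
def FinSupp (G X : Type*) [Group G] : Subgroup (X → G) where
  carrier := {φ | (Function.mulSupport φ).Finite}
  one_mem' := by simp [Function.mulSupport_one]
  mul_mem' := by
    intro a b ha hb
    exact ((ha.union hb).subset (Function.mulSupport_mul a b))
  inv_mem' := by
    intro a ha
    simpa [Function.mulSupport_inv] using ha

/-- The automorphism of `FinSupp G X` given by `h : H`, `(h.φ)(x) = φ(h⁻¹ • x)`. -/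
def wreathAut (G H X : Type*) [Group G] [Group H] [MulAction H X] (h : H) :
    FinSupp G X ≃* FinSupp G X where
  toFun φ := ⟨fun x => φ.1 (h⁻¹ • x), by
    have hsub : Function.mulSupport (fun x => φ.1 (h⁻¹ • x)) ⊆
        (fun x => h⁻¹ • x) ⁻¹' Function.mulSupport φ.1 := fun x hx => hx
    exact (φ.2.preimage ((MulAction.injective (h⁻¹ : H)).injOn)).subset hsub⟩
  invFun φ := ⟨fun x => φ.1 (h • x), by
    have hsub : Function.mulSupport (fun x => φ.1 (h • x)) ⊆
        (fun x => h • x) ⁻¹' Function.mulSupport φ.1 := fun x hx => hx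
    exact (φ.2.preimage ((MulAction.injective h).injOn)).subset hsub⟩
  left_inv φ := by ext x; simp
  right_inv φ := by ext x; simp
  map_mul' φ ψ := rfl

/-- The action of `H` on `FinSupp G X` by automorphisms. -/
def wreathAction (G H X : Type*) [Group G] [Group H] [MulAction H X] :
    H →* MulAut (FinSupp G X) where
  toFun := wreathAut G H X
  map_one' := by
    ext φ x
    simp [wreathAut]
  map_mul' a b := by
    ext φ x
    simp [wreathAut, mul_smul]

/-- The restricted wreath product `G ≀_X H`. -/
abbrev Wreath (G H X : Type*) [Group G] [Group H] [MulAction H X] :=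
  FinSupp G X ⋊[wreathAction G H X] H

open scoped Classical in
/-- The function `δ_x^s` sending `x` to `s` and everything else to `1`. -/
noncomputable def deltaFn {G X : Type*} [Group G] (x : X) (s : G) : FinSupp G X :=
  ⟨fun y => if y = x then s else 1, (Set.finite_singleton x).subset (by
    intro y hy
    simp only [Function.mem_mulSupport] at hy
    by_contra hxy
    simp only [Set.mem_singleton_iff] at hxy
    simp [hxy] at hy)⟩

open scoped Classical in
/-- The number of ends of a graph: the supremum over finite vertex sets `K` of the
number of infinite connected components of the induced subgraph on the complement of `K`. -/
noncomputable def numEnds {V : Type*} (Γ : SimpleGraph V) : ℕ∞ :=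
  ⨆ K : Finset V,
    {C : (SimpleGraph.induce ((↑K : Set V)ᶜ) Γ).ConnectedComponent | C.supp.Infinite}.encard

/-- The orbital graph of an action of `G` on `X` with respect to `S ⊆ G`:
vertices `X`, an edge between `x` and `s • x` for each `s ∈ S`. -/
def orbitalGraph (G : Type*) [Group G] (S : Set G) (X : Type*) [MulAction G X] :
    SimpleGraph X where
  Adj x y := x ≠ y ∧ ∃ s ∈ S, (s • x = y ∨ s • y = x)
  symm := by
    constructor; rintro x y ⟨h, s, hs, h'⟩
    exact ⟨h.symm, s, hs, h'.symm⟩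
  loopless := by constructor; rintro x ⟨h, -⟩; exact h rfl

/-- The Schreier graph `Sch(G, H; S)`: vertices the left cosets `G ⧸ H`,
an edge between `gH` and `sgH` for each `s ∈ S`. -/
def schreierGraph (G : Type*) [Group G] (S : Set G) (H : Subgroup G) :
    SimpleGraph (G ⧸ H) where
  Adj x y := x ≠ y ∧ ∃ s ∈ S, ∃ g : G,
      (((g : G ⧸ H) = x ∧ ((s * g : G) : G ⧸ H) = y)) ∨
      (((g : G ⧸ H) = y ∧ ((s * g : G) : G ⧸ H) = x))
  symm := by
    constructor; rintro x y ⟨h, s, hs, g, hg⟩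
    exact ⟨h.symm, s, hs, g, hg.symm⟩
  loopless := by constructor; rintro x ⟨h, -⟩; exact h rfl

/-- The Cayley graph of `G` with respect to `S`. -/
def cayleyGraph (G : Type*) [Group G] (S : Set G) : SimpleGraph G :=
  orbitalGraph G S G

/-- `S` is a finite symmetric generating set of `G`. -/
def IsSymmGen {G : Type*} [Group G] (S : Finset G) : Prop :=
  (∀ s ∈ S, s⁻¹ ∈ S) ∧ Subgroup.closure (S : Set G) = ⊤

/-- A group has property FW if all of its Schreier graphs with respect to a finite
symmetric generating set have at most one end. -/
def HasFW (G : Type*) [Group G] : Prop :=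
  ∀ S : Finset G, IsSymmGen S → ∀ L : Subgroup G, numEnds (schreierGraph G (↑S) L) ≤ 1

namespace Stmt18Aux

open SemidirectProduct Function

variable {G H X : Type*} [Group G] [Group H] [MulAction H X]

lemma deltaFn_self (x : X) (s : G) : ((deltaFn x s : FinSupp G X) : X → G) x = s := by
  simp [deltaFn]

lemma deltaFn_ne {y x : X} (h : y ≠ x) (s : G) :
    ((deltaFn x s : FinSupp G X) : X → G) y = 1 := by
  simp [deltaFn, h]

lemma deltaFn_one (x : X) : (deltaFn x (1 : G)) = (1 : FinSupp G X) := by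
  ext y
  by_cases h : y = x <;> simp [deltaFn, h]

lemma deltaFn_mul (x : X) (a b : G) :
    deltaFn x a * deltaFn x b = (deltaFn x (a * b) : FinSupp G X) := by
  ext y
  by_cases h : y = x <;> simp [deltaFn, h]

lemma deltaFn_inv (x : X) (a : G) :
    (deltaFn x a)⁻¹ = (deltaFn x a⁻¹ : FinSupp G X) := by
  ext y
  by_cases h : y = x <;> simp [deltaFn, h]

/-- `g ↦ δ_x^g` as a homomorphism. -/
noncomputable def deltaHom (x : X) : G →* FinSupp G X where
  toFun g := deltaFn x g
  map_one' := deltaFn_one x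
  map_mul' a b := (deltaFn_mul x a b).symm

lemma aut_deltaFn (h : H) (x : X) (s : G) :
    (wreathAction G H X h) (deltaFn x s) = deltaFn (h • x) s := by
  ext y
  show ((deltaFn x s : FinSupp G X) : X → G) (h⁻¹ • y) = _
  by_cases hy : y = h • x
  · rw [hy, deltaFn_self]
    rw [show h⁻¹ • h • x = x by simp, deltaFn_self]
  · rw [deltaFn_ne hy, deltaFn_ne]
    intro hc
    exact hy (by rw [← hc]; simp)

/-- The action of the wreath product on `X × G`. -/
def mu (w : Wreath G H X) (p : X × G) : X × G :=
  (w.right • p.1, (w.left : X → G) (w.right • p.1) * p.2)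

lemma mu_one (p : X × G) : mu (1 : Wreath G H X) p = p := by
  simp [mu]

lemma mu_mul (a b : Wreath G H X) (p : X × G) : mu (a * b) p = mu a (mu b p) := by
  unfold mu
  ext
  · simp [mul_smul]
  · show ((a.left * (wreathAction G H X a.right) b.left : FinSupp G X) : X → G)
        ((a.right * b.right) • p.1) * p.2 = _
    have : ((wreathAction G H X a.right b.left : FinSupp G X) : X → G)
        ((a.right * b.right) • p.1) = (b.left : X → G) (b.right • p.1) := by
      show (b.left : X → G) (a.right⁻¹ • (a.right * b.right) • p.1) = _
      rw [← mul_smul, inv_mul_cancel_left]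
    simp only [MulMemClass.coe_mul, Pi.mul_apply, mul_smul, mul_assoc]
    rw [mul_smul] at this
    rw [this]

lemma mu_inr (t : H) (p : X × G) : mu (inr t : Wreath G H X) p = (t • p.1, p.2) := by
  simp [mu]

lemma mu_inl (n : FinSupp G X) (p : X × G) :
    mu (inl n : Wreath G H X) p = (p.1, (n : X → G) p.1 * p.2) := by
  simp [mu]

/-- The stabilizer of `(x0, 1)`. -/
def stab (G : Type*) {H X : Type*} [Group G] [Group H] [MulAction H X] (x0 : X) :
    Subgroup (Wreath G H X) where
  carrier := {w | mu w (x0, (1 : G)) = (x0, 1)}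
  one_mem' := mu_one _
  mul_mem' := by
    intro a b ha hb
    show mu (a * b) _ = _
    rw [mu_mul, hb, ha]
  inv_mem' := by
    intro a ha
    show mu a⁻¹ _ = _
    conv_lhs => rw [← ha]
    rw [← mu_mul, inv_mul_cancel, mu_one]

/-- Evaluation map on the coset space. -/
def EV (G : Type*) {H X : Type*} [Group G] [Group H] [MulAction H X] (x0 : X) :
    (Wreath G H X ⧸ stab G x0) → X × G :=
  fun v => Quotient.liftOn' v (fun w => mu w (x0, 1)) (by
    intro a b hab
    rw [QuotientGroup.leftRel_apply] at hab
    show mu a (x0,1) = mu b (x0,1)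
    have hb : b = a * (a⁻¹ * b) := by group
    rw [hb, mu_mul, show mu (a⁻¹*b) (x0,1) = (x0,1) from hab])

lemma EV_mk (x0 : X) (w : Wreath G H X) :
    EV G x0 (w : Wreath G H X ⧸ stab G x0) = mu w (x0, 1) := rfl

lemma EV_inj (x0 : X) : Function.Injective (EV G (H := H) x0) := by
  intro va vb
  obtain ⟨a, rfl⟩ := QuotientGroup.mk_surjective va
  obtain ⟨b, rfl⟩ := QuotientGroup.mk_surjective vb
  intro hab
  rw [EV_mk, EV_mk] at hab
  rw [QuotientGroup.eq]
  show mu (a⁻¹ * b) (x0, 1) = (x0, 1)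
  rw [mu_mul, ← hab, ← mu_mul, inv_mul_cancel, mu_one]

lemma mk_mul_congr {Γ : Type*} [Group Γ] {L : Subgroup Γ} {a b : Γ}
    (h : (a : Γ ⧸ L) = b) (s : Γ) : ((s * a : Γ) : Γ ⧸ L) = ((s * b : Γ) : Γ ⧸ L) := by
  rw [QuotientGroup.eq] at h ⊢
  simpa [mul_assoc] using h

section Graph

variable {V : Type*}

lemma reach_closed (Γ : SimpleGraph V) {D : Set V}
    (hD : ∀ ⦃u v : V⦄, u ∈ D → Γ.Adj u v → v ∈ D) {u v : V}
    (h : Γ.Reachable u v) : u ∈ D → v ∈ D := by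
  obtain ⟨p⟩ := h
  induction p with
  | nil => exact id
  | cons hab p ih => exact fun hu => ih (hD hu hab)

lemma exists_boundary (Γ : SimpleGraph V) (K : Finset V) :
    ∀ {a b : V} (_ : Γ.Walk a b) (ha : a ∈ ((↑K : Set V)ᶜ : Set V)) (_ : b ∈ K),
    ∃ v : ((↑K : Set V)ᶜ : Set V), (∃ k ∈ K, Γ.Adj ↑v k) ∧
      (SimpleGraph.induce ((↑K : Set V)ᶜ) Γ).Reachable ⟨a, ha⟩ v := by
  intro a b p
  induction p with
  | nil =>
    intro ha hb
    exact absurd hb (by simpa using ha)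
  | @cons a c b hac p ih =>
    intro ha hb
    by_cases hc : c ∈ K
    · exact ⟨⟨a, ha⟩, ⟨c, hc, hac⟩, SimpleGraph.Reachable.refl _⟩
    · have hc' : c ∈ ((↑K : Set V)ᶜ : Set V) := by simpa using hc
      obtain ⟨v, hvk, hreach⟩ := ih hc' hb
      refine ⟨v, hvk, SimpleGraph.Reachable.trans ?_ hreach⟩
      exact SimpleGraph.Adj.reachable (by exact hac)
end Graph

end Stmt18Aux
namespace Stmt18Aux

open SemidirectProduct Function

variable {G H X : Type*} [Group G] [Group H] [MulAction H X]

open scoped Classical in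
/-- The generating set of the wreath product. -/
noncomputable def Sgen (T' : Finset H) (U' : Finset G) (Cols : Finset X) :
    Finset (Wreath G H X) :=
  T'.image (inr : H →* Wreath G H X) ∪
    Finset.image₂ (fun (c : X) (u : G) => (inl (deltaFn c u) : Wreath G H X)) Cols U'

lemma mem_Sgen {T' : Finset H} {U' : Finset G} {Cols : Finset X} {s : Wreath G H X}
    (hs : s ∈ Sgen T' U' Cols) :
    (∃ t ∈ T', s = inr t) ∨ ∃ c ∈ Cols, ∃ u ∈ U', s = inl (deltaFn c u) := by
  classical
  rw [Sgen, Finset.mem_union] at hs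
  rcases hs with hs | hs
  · obtain ⟨t, ht, rfl⟩ := Finset.mem_image.mp hs
    exact Or.inl ⟨t, ht, rfl⟩
  · obtain ⟨c, hc, u, hu, rfl⟩ := Finset.mem_image₂.mp hs
    exact Or.inr ⟨c, hc, u, hu, rfl⟩

lemma inr_mem_Sgen {T' : Finset H} {U' : Finset G} {Cols : Finset X} {t : H} (ht : t ∈ T') :
    (inr t : Wreath G H X) ∈ Sgen T' U' Cols := by
  classical
  rw [Sgen, Finset.mem_union]
  exact Or.inl (Finset.mem_image.mpr ⟨t, ht, rfl⟩)

lemma inl_delta_mem_Sgen {T' : Finset H} {U' : Finset G} {Cols : Finset X} {c : X} {u : G}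
    (hc : c ∈ Cols) (hu : u ∈ U') :
    (inl (deltaFn c u) : Wreath G H X) ∈ Sgen T' U' Cols := by
  classical
  rw [Sgen, Finset.mem_union]
  exact Or.inr (Finset.mem_image₂.mpr ⟨c, hc, u, hu, rfl⟩)

lemma Sgen_symm {T' : Finset H} {U' : Finset G} {Cols : Finset X}
    (hT : ∀ t ∈ T', t⁻¹ ∈ T') (hU : ∀ u ∈ U', u⁻¹ ∈ U') :
    ∀ s ∈ Sgen (G := G) T' U' Cols, s⁻¹ ∈ Sgen T' U' Cols := by
  intro s hs
  rcases mem_Sgen hs with ⟨t, ht, rfl⟩ | ⟨c, hc, u, hu, rfl⟩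
  · rw [← map_inv]
    exact inr_mem_Sgen (hT t ht)
  · rw [← map_inv, deltaFn_inv]
    exact inl_delta_mem_Sgen hc (hU u hu)

lemma Sgen_gen {T' : Finset H} {U' : Finset G} {Cols : Finset X}
    (hTtop : Subgroup.closure (T' : Set H) = ⊤)
    (hUtop : Subgroup.closure (U' : Set G) = ⊤)
    (hCols : ∀ x : X, ∃ c ∈ Cols, ∃ h : H, h • c = x) :
    Subgroup.closure ((Sgen T' U' Cols : Finset (Wreath G H X)) : Set (Wreath G H X)) = ⊤ := by
  classical
  rw [eq_top_iff]
  have hinr : ∀ h : H, (inr h : Wreath G H X) ∈ Subgroup.closure (Sgen T' U' Cols : Set _) := by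
    intro h
    have h1 : inr h ∈ Subgroup.map (inr : H →* Wreath G H X) (Subgroup.closure (T' : Set H)) :=
      ⟨h, by rw [hTtop]; trivial, rfl⟩
    rw [MonoidHom.map_closure] at h1
    refine Subgroup.closure_mono ?_ h1
    rintro w ⟨t, ht, rfl⟩
    exact inr_mem_Sgen ht
  have hdelta : ∀ (x : X) (g : G),
      (inl (deltaFn x g) : Wreath G H X) ∈ Subgroup.closure (Sgen T' U' Cols : Set _) := by
    intro x g
    obtain ⟨c, hc, h, hx⟩ := hCols x
    have h1 : ∀ u : G, (inl (deltaFn c u) : Wreath G H X) ∈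
        Subgroup.closure (Sgen T' U' Cols : Set _) := by
      intro u
      have h2 : inl (deltaFn c u) ∈ Subgroup.map
          ((inl : FinSupp G X →* Wreath G H X).comp (deltaHom c))
          (Subgroup.closure (U' : Set G)) := ⟨u, by rw [hUtop]; trivial, rfl⟩
      rw [MonoidHom.map_closure] at h2
      refine Subgroup.closure_mono ?_ h2
      rintro w ⟨v, hv, rfl⟩
      exact inl_delta_mem_Sgen hc hv
    have h3 : deltaFn x g = (wreathAction G H X h) (deltaFn c g) := by
      rw [aut_deltaFn, hx]
    rw [h3, inl_aut]
    exact mul_mem (mul_mem (hinr h) (h1 g)) (hinr h⁻¹)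
  have hinl : ∀ f : FinSupp G X,
      (inl f : Wreath G H X) ∈ Subgroup.closure (Sgen T' U' Cols : Set _) := by
    have key : ∀ (sf : Finset X) (f : FinSupp G X),
        Function.mulSupport (f : X → G) ⊆ ↑sf →
        (inl f : Wreath G H X) ∈ Subgroup.closure (Sgen T' U' Cols : Set _) := by
      intro sf
      induction sf using Finset.induction_on with
      | empty =>
        intro f hf
        have : f = 1 := by
          ext y
          by_contra hy
          simpa using hf hy
        rw [this, map_one]
        exact one_mem _
      | @insert x sf' hx ih =>
        intro f hf
        set f' : FinSupp G X := ⟨Function.update (f : X → G) x 1, by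
          refine f.2.subset ?_
          intro y hy
          rw [Function.mem_mulSupport] at hy ⊢
          by_cases hyx : y = x
          · subst hyx; simp at hy
          · rwa [Function.update_of_ne hyx] at hy⟩ with hf'
        have hdecomp : f = deltaFn x ((f : X → G) x) * f' := by
          ext y
          show (f : X → G) y = ((deltaFn x ((f : X → G) x) : FinSupp G X) : X → G) y *
            Function.update (f : X → G) x 1 y
          by_cases hyx : y = x
          · subst hyx; rw [deltaFn_self, Function.update_self, mul_one]
          · rw [deltaFn_ne hyx, Function.update_of_ne hyx, one_mul]
        have hsub : Function.mulSupport (f' : X → G) ⊆ ↑sf' := by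
          intro y hy
          rw [Function.mem_mulSupport] at hy
          by_cases hyx : y = x
          · subst hyx; simp [hf'] at hy
          · have : y ∈ Function.mulSupport (f : X → G) := by
              rw [Function.mem_mulSupport]
              rw [show (f' : X → G) = Function.update (f : X → G) x 1 from rfl,
                Function.update_of_ne hyx] at hy
              exact hy
            have := hf this
            simp only [Finset.coe_insert, Set.mem_insert_iff] at this
            rcases this with h | h
            · exact absurd h hyx
            · exact h
        rw [hdecomp, map_mul]
        exact mul_mem (hdelta _ _) (ih f' hsub)
    intro f
    exact key f.2.toFinset f (fun y hy => Finset.mem_coe.mpr ((Set.Finite.mem_toFinset (hs := f.2)).mpr hy))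
  rintro w -
  rw [← inl_left_mul_inr_right w]
  exact mul_mem (hinl _) (hinr _)

end Stmt18Aux
namespace Stmt18Aux

lemma exists_word {Γ : Type*} [Group Γ] {T : Finset Γ} (hsym : ∀ t ∈ T, t⁻¹ ∈ T) {g : Γ}
    (hg : g ∈ Subgroup.closure (T : Set Γ)) :
    ∃ l : List Γ, (∀ t ∈ l, t ∈ T) ∧ l.prod = g := by
  have h1 : g ∈ (Subgroup.closure (T : Set Γ)).toSubmonoid := hg
  rw [Subgroup.closure_toSubmonoid] at h1
  obtain ⟨l, hl, rfl⟩ := Submonoid.exists_list_of_mem_closure h1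
  refine ⟨l, fun t ht => ?_, rfl⟩
  rcases hl t ht with h | h
  · exact h
  · have := hsym _ (by simpa using Set.mem_inv.mp h)
    rwa [inv_inv] at this

end Stmt18Aux
open Stmt18Aux SemidirectProduct

/-- If `G` and `H` are finitely generated, `G` is nontrivial, `H` acts on `X` with
finitely many orbits and `G ≀_X H` has property FW, then `X` is finite. -/
theorem stmt18 {G H X : Type*} [Group G] [Group H] [MulAction H X] [Nontrivial G]
    (hG : Group.FG G) (hH : Group.FG H)
    (horb : Finite (Quotient (MulAction.orbitRel H X)))
    (hFW : HasFW (Wreath G H X)) : Finite X := by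
  classical
  by_contra hX
  rw [not_finite_iff_infinite] at hX
  -- an infinite orbit
  obtain ⟨c, hc⟩ : ∃ c : Quotient (MulAction.orbitRel H X),
      {x : X | Quotient.mk (MulAction.orbitRel H X) x = c}.Infinite := by
    by_contra hall
    push_neg at hall
    have huniv : (Set.univ : Set X) =
        ⋃ c, {x : X | Quotient.mk (MulAction.orbitRel H X) x = c} := by
      ext x; simp
    have : (Set.univ : Set X).Finite := by
      rw [huniv]; exact Set.finite_iUnion hall
    exact this.not_infinite Set.infinite_univ
  set x0 : X := c.out with hx0def
  have hO : (MulAction.orbit H x0).Infinite := by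
    refine hc.mono ?_
    intro x hx
    simp only [Set.mem_setOf_eq] at hx
    have : Quotient.mk (MulAction.orbitRel H X) x
        = Quotient.mk (MulAction.orbitRel H X) x0 := by
      rw [hx, hx0def, Quotient.out_eq]
    exact MulAction.orbitRel_apply.mp (Quotient.eq.mp this)
  -- generating sets
  obtain ⟨U0, hU0⟩ := hG.out
  obtain ⟨T0, hT0⟩ := hH.out
  set U' : Finset G := U0 ∪ U0.image (·⁻¹) with hU'def
  set T' : Finset H := T0 ∪ T0.image (·⁻¹) with hT'def
  have hU'sym : ∀ u ∈ U', u⁻¹ ∈ U' := by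
    intro u hu
    rw [hU'def, Finset.mem_union] at hu ⊢
    rcases hu with hu | hu
    · exact Or.inr (Finset.mem_image.mpr ⟨u, hu, rfl⟩)
    · obtain ⟨v, hv, rfl⟩ := Finset.mem_image.mp hu
      exact Or.inl (by simpa using hv)
  have hT'sym : ∀ t ∈ T', t⁻¹ ∈ T' := by
    intro t ht
    rw [hT'def, Finset.mem_union] at ht ⊢
    rcases ht with ht | ht
    · exact Or.inr (Finset.mem_image.mpr ⟨t, ht, rfl⟩)
    · obtain ⟨v, hv, rfl⟩ := Finset.mem_image.mp ht
      exact Or.inl (by simpa using hv)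
  have hU'top : Subgroup.closure (U' : Set G) = ⊤ := by
    rw [eq_top_iff, ← hU0]
    exact Subgroup.closure_mono (by rw [hU'def]; simp [Finset.coe_union, Set.subset_union_left])
  have hT'top : Subgroup.closure (T' : Set H) = ⊤ := by
    rw [eq_top_iff, ← hT0]
    exact Subgroup.closure_mono (by rw [hT'def]; simp [Finset.coe_union, Set.subset_union_left])
  haveI : Fintype (Quotient (MulAction.orbitRel H X)) := Fintype.ofFinite _
  set Cols : Finset X := Finset.image Quotient.out (Finset.univ : Finset (Quotient (MulAction.orbitRel H X))) with hColsdef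
  have hx0Cols : x0 ∈ Cols := by
    rw [hColsdef]
    exact Finset.mem_image.mpr ⟨c, Finset.mem_univ _, rfl⟩
  have hCols : ∀ x : X, ∃ cc ∈ Cols, ∃ h : H, h • cc = x := by
    intro x
    refine ⟨(Quotient.mk (MulAction.orbitRel H X) x).out,
      Finset.mem_image.mpr ⟨_, Finset.mem_univ _, rfl⟩, ?_⟩
    have : Quotient.mk (MulAction.orbitRel H X) x =
        Quotient.mk (MulAction.orbitRel H X) (Quotient.mk (MulAction.orbitRel H X) x).out := by
      rw [Quotient.out_eq]
    have hrel := MulAction.orbitRel_apply.mp (Quotient.eq.mp this)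
    exact MulAction.mem_orbit_iff.mp hrel
  -- the generating set of the wreath product
  set S : Finset (Wreath G H X) := Sgen T' U' Cols with hSdef
  have hSsym : IsSymmGen S := ⟨by rw [hSdef]; exact Sgen_symm hT'sym hU'sym,
    by rw [hSdef]; exact Sgen_gen hT'top hU'top hCols⟩
  set L : Subgroup (Wreath G H X) := stab G x0 with hLdef
  set E : (Wreath G H X ⧸ L) → X × G := EV G x0 with hEdef
  have hEinj : Function.Injective E := EV_inj x0
  set Γ : SimpleGraph (Wreath G H X ⧸ L) := schreierGraph (Wreath G H X) (↑S) L with hΓdef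
  -- the finite set K of vertices to remove
  have hmbase : ∀ w : Wreath G H X, E (QuotientGroup.mk w) = mu w (x0, 1) := fun w => rfl
  set K0 : Set (Wreath G H X ⧸ L) := E ⁻¹' ((↑Cols : Set X) ×ˢ ({1} : Set G)) with hK0def
  have hK0fin : K0.Finite := by
    refine Set.Finite.preimage hEinj.injOn ?_
    exact (Cols.finite_toSet.prod (Set.finite_singleton 1))
  set K : Finset (Wreath G H X ⧸ L) := hK0fin.toFinset with hKdef
  have hKmem : ∀ v, v ∈ K ↔ ((E v).1 ∈ Cols ∧ (E v).2 = 1) := by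
    intro v
    rw [hKdef, Set.Finite.mem_toFinset, hK0def, Set.mem_preimage, Set.mem_prod,
      Set.mem_singleton_iff, Finset.mem_coe]
  have h1K : (QuotientGroup.mk 1 : Wreath G H X ⧸ L) ∈ K := by
    rw [hKmem, hmbase, mu_one]
    exact ⟨hx0Cols, rfl⟩
  -- connectivity of the Schreier graph
  have hadjmk : ∀ (s : Wreath G H X) (_ : s ∈ S) (w : Wreath G H X),
      (QuotientGroup.mk (s * w) : Wreath G H X ⧸ L) = QuotientGroup.mk w ∨
      Γ.Adj (QuotientGroup.mk (s * w)) (QuotientGroup.mk w) := by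
    intro s hs w
    by_cases heq : (QuotientGroup.mk (s * w) : Wreath G H X ⧸ L) = QuotientGroup.mk w
    · exact Or.inl heq
    · exact Or.inr ⟨heq, s, hs, w, Or.inr ⟨rfl, rfl⟩⟩
  have hconn : Γ.Preconnected := by
    have hto1 : ∀ w : Wreath G H X,
        Γ.Reachable (QuotientGroup.mk w) (QuotientGroup.mk 1) := by
      intro w
      obtain ⟨l, hl, rfl⟩ := exists_word hSsym.1 (by rw [hSsym.2]; trivial : w ∈ Subgroup.closure (S : Set (Wreath G H X)))
      induction l with
      | nil => exact SimpleGraph.Reachable.refl _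
      | cons s l ih =>
        have hstep := hadjmk s (hl s (by simp)) l.prod
        have htail : Γ.Reachable (QuotientGroup.mk l.prod) (QuotientGroup.mk 1) :=
          ih (fun t ht => hl t (by simp [ht]))
        rw [List.prod_cons]
        rcases hstep with heq | hadj
        · rwa [heq]
        · exact (hadj.reachable).trans htail
    intro v v'
    obtain ⟨a, rfl⟩ := QuotientGroup.mk_surjective v
    obtain ⟨b, rfl⟩ := QuotientGroup.mk_surjective v'
    exact (hto1 a).trans (hto1 b).symm
  -- adjacency in terms of mu
  have adj_ev : ∀ {v v' : Wreath G H X ⧸ L}, Γ.Adj v v' →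
      ∃ s ∈ S, E v' = mu s (E v) ∨ E v = mu s (E v') := by
    rintro v v' ⟨hne, s, hs, g, hg | hg⟩
    · refine ⟨s, hs, Or.inl ?_⟩
      rw [← hg.1, ← hg.2, hmbase, hmbase, mu_mul]
    · refine ⟨s, hs, Or.inr ?_⟩
      rw [← hg.1, ← hg.2, hmbase, hmbase, mu_mul]
  -- the induced graph on the complement of K
  set V' : Set (Wreath G H X ⧸ L) := (↑K : Set (Wreath G H X ⧸ L))ᶜ with hV'def
  set Γ' : SimpleGraph V' := SimpleGraph.induce V' Γ with hΓ'def
  -- finiteness of the set of components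
  have hNfin : {v : V' | ∃ k ∈ K, Γ.Adj ↑v k}.Finite := by
    have hbig : (⋃ s ∈ (S : Set (Wreath G H X)), ⋃ k ∈ (K : Set (Wreath G H X ⧸ L)),
        {(QuotientGroup.mk (s * k.out) : Wreath G H X ⧸ L)}).Finite :=
      S.finite_toSet.biUnion fun s _ => K.finite_toSet.biUnion fun k _ => Set.finite_singleton _
    refine Set.Finite.of_finite_image (hbig.subset ?_) Subtype.val_injective.injOn
    rintro x ⟨v, ⟨k, hk, hne, s, hs, g, hg⟩, rfl⟩
    rcases hg with ⟨hg1, hg2⟩ | ⟨hg1, hg2⟩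
    · -- ⟦g⟧ = ↑v, ⟦s*g⟧ = k
      have h1 : (↑v : Wreath G H X ⧸ L) = QuotientGroup.mk (s⁻¹ * k.out) := by
        rw [← hg1]
        have := mk_mul_congr (L := L) (hg2.trans (QuotientGroup.out_eq' k).symm) s⁻¹
        rwa [inv_mul_cancel_left] at this
      refine Set.mem_biUnion (hSsym.1 s hs) (Set.mem_biUnion hk ?_)
      simpa using h1
    · -- ⟦g⟧ = k, ⟦s*g⟧ = ↑v
      have h1 : (↑v : Wreath G H X ⧸ L) = QuotientGroup.mk (s * k.out) := by
        rw [← hg2]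
        exact mk_mul_congr (L := L) (hg1.trans (QuotientGroup.out_eq' k).symm) s
      refine Set.mem_biUnion hs (Set.mem_biUnion hk ?_)
      simpa using h1
  haveI hCompFin : Finite Γ'.ConnectedComponent := by
    haveI := hNfin.to_subtype
    refine Finite.of_surjective
      (fun n : {v : V' | ∃ k ∈ K, Γ.Adj ↑v k} => Γ'.connectedComponentMk ↑n) ?_
    intro C
    obtain ⟨v, rfl⟩ := C.exists_rep
    obtain ⟨p⟩ := hconn ↑v (QuotientGroup.mk 1)
    obtain ⟨v', hv'bd, hreach⟩ := exists_boundary Γ K p v.2 h1K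
    exact ⟨⟨v', hv'bd⟩, SimpleGraph.ConnectedComponent.sound hreach.symm⟩
  -- the set D of level-one vertices off the columns
  set Dset : Set (Wreath G H X ⧸ L) := {v | (E v).2 = 1 ∧ (E v).1 ∉ Cols} with hDdef
  have hDK : ∀ v ∈ Dset, v ∈ V' := by
    intro v hv hvK
    exact hv.2 ((hKmem v).mp (Finset.mem_coe.mp hvK)).1
  have hfst : ∀ v : Wreath G H X ⧸ L, (E v).1 ∈ MulAction.orbit H x0 := by
    intro v
    obtain ⟨w, rfl⟩ := QuotientGroup.mk_surjective v
    rw [hmbase]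
    exact ⟨w.right, rfl⟩
  have hDinf : Dset.Infinite := by
    have h1 : ((MulAction.orbit H x0) \ ↑Cols).Infinite := hO.diff Cols.finite_toSet
    have h2 : (MulAction.orbit H x0) \ ↑Cols ⊆ Prod.fst '' (E '' Dset) := by
      rintro x ⟨hxO, hxC⟩
      obtain ⟨h, rfl⟩ := hxO
      have hval : E (QuotientGroup.mk (inr h)) = (h • x0, 1) := by
        rw [hmbase, mu_inr]
      exact ⟨E (QuotientGroup.mk (inr h)),
        ⟨QuotientGroup.mk (inr h), ⟨by rw [hval], by rw [hval]; exact hxC⟩, rfl⟩,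
        by rw [hval]⟩
    exact Set.Infinite.of_image E (Set.Infinite.of_image Prod.fst (h1.mono h2))
  -- D is closed under adjacency in the induced graph
  have hDadj : ∀ ⦃u v : V'⦄, u ∈ (Subtype.val ⁻¹' Dset : Set V') → Γ'.Adj u v →
      v ∈ (Subtype.val ⁻¹' Dset : Set V') := by
    intro u v hu hadj
    have hadj' : Γ.Adj ↑u ↑v := hadj
    obtain ⟨s, hs, hcase⟩ := adj_ev hadj'
    have hu' : (↑u : Wreath G H X ⧸ L) ∈ Dset := hu
    have hv2 : (E ↑v).2 = 1 := by
      rcases mem_Sgen hs with ⟨t, ht, rfl⟩ | ⟨cc, hcc, uu, huu, rfl⟩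
      · rcases hcase with hc | hc
        · rw [hc, mu_inr]; exact hu'.1
        · have : (E ↑u).2 = (E ↑v).2 := by rw [hc, mu_inr]
          rw [← this]; exact hu'.1
      · rcases hcase with hc | hc
        · rw [hc, mu_inl, deltaFn_ne (fun hh => hu'.2 (by rw [hh]; exact hcc)), one_mul]
          exact hu'.1
        · have h1 : (E ↑u).1 = (E ↑v).1 := by rw [hc, mu_inl]
          have h2 : (E ↑u).2 =
              ((deltaFn cc uu : FinSupp G X) : X → G) (E ↑v).1 * (E ↑v).2 := by
            rw [hc, mu_inl]
          rw [deltaFn_ne (fun hh => hu'.2 (by rw [h1, hh]; exact hcc)), one_mul] at h2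
          rw [← h2]; exact hu'.1
    refine ⟨hv2, fun hvC => ?_⟩
    exact v.2 (Finset.mem_coe.mpr ((hKmem ↑v).mpr ⟨hvC, hv2⟩))
  -- the slice at level s0
  obtain ⟨s0, hs0⟩ := exists_ne (1 : G)
  set wfun : H → Wreath G H X :=
    fun h => ⟨(wreathAction G H X h) (deltaFn x0 s0), h⟩ with hwfundef
  have hEw : ∀ h : H, E (QuotientGroup.mk (wfun h)) = (h • x0, s0) := by
    intro h
    rw [hmbase]
    show (h • x0,
      (((wreathAction G H X h) (deltaFn x0 s0) : FinSupp G X) : X → G) (h • x0) * 1) = _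
    rw [aut_deltaFn, deltaFn_self, mul_one]
  have hwV' : ∀ h : H, (QuotientGroup.mk (wfun h) : Wreath G H X ⧸ L) ∈ V' := by
    intro h hmem
    have := (hKmem _).mp (Finset.mem_coe.mp hmem)
    rw [hEw] at this
    exact hs0 this.2
  have hstep : ∀ t h : H, inr t * wfun h = wfun (t * h) := by
    intro t h
    refine SemidirectProduct.ext ?_ ?_
    · show (1 : FinSupp G X) * (wreathAction G H X t) ((wreathAction G H X h) (deltaFn x0 s0))
        = (wreathAction G H X (t * h)) (deltaFn x0 s0)
      rw [one_mul, map_mul]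
      rfl
    · show t * h = t * h
      rfl
  have hreachslice : ∀ h : H,
      Γ'.Reachable ⟨QuotientGroup.mk (wfun h), hwV' h⟩ ⟨QuotientGroup.mk (wfun 1), hwV' 1⟩ := by
    intro h
    obtain ⟨l, hl, hprod⟩ := exists_word hT'sym
      (by rw [hT'top]; trivial : h ∈ Subgroup.closure (T' : Set H))
    subst hprod
    induction l with
    | nil => exact SimpleGraph.Reachable.refl _
    | cons t l ih =>
      have hadj := hadjmk (inr t) (inr_mem_Sgen (hl t List.mem_cons_self)) (wfun l.prod)
      rw [hstep] at hadj
      have hih := ih (fun t' ht' => hl t' (List.mem_cons_of_mem _ ht'))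
      have hpc : (t :: l).prod = t * l.prod := List.prod_cons
      rcases hadj with heq | hadj
      · have hsub : (⟨QuotientGroup.mk (wfun ((t :: l).prod)), hwV' _⟩ : V')
            = ⟨QuotientGroup.mk (wfun l.prod), hwV' _⟩ := Subtype.ext (by rw [hpc]; exact heq)
        rw [hsub]
        exact hih
      · have hadj' : Γ'.Adj ⟨QuotientGroup.mk (wfun ((t :: l).prod)), hwV' _⟩
            ⟨QuotientGroup.mk (wfun l.prod), hwV' _⟩ := by
          show Γ.Adj _ _
          rw [hpc]
          exact hadj
        exact hadj'.reachable.trans hih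
  have hsliceC2 : ∀ v : V', (E ↑v).2 = s0 →
      Γ'.connectedComponentMk v = Γ'.connectedComponentMk ⟨QuotientGroup.mk (wfun 1), hwV' 1⟩ := by
    intro v hv
    obtain ⟨h, hh⟩ := hfst ↑v
    have hvv : v = ⟨QuotientGroup.mk (wfun h), hwV' h⟩ := by
      refine Subtype.ext (hEinj ?_)
      rw [hEw]
      exact Prod.ext_iff.mpr ⟨hh.symm, hv⟩
    rw [hvv]
    exact SimpleGraph.ConnectedComponent.sound (hreachslice h)
  set C2 : Γ'.ConnectedComponent :=
    Γ'.connectedComponentMk ⟨QuotientGroup.mk (wfun 1), hwV' 1⟩ with hC2def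
  have hC2inf : C2.supp.Infinite := by
    have hEslice : {v : Wreath G H X ⧸ L | (E v).2 = s0}.Infinite := by
      have h2 : (MulAction.orbit H x0) ⊆
          Prod.fst '' (E '' {v : Wreath G H X ⧸ L | (E v).2 = s0}) := by
        rintro x ⟨h, rfl⟩
        exact ⟨E (QuotientGroup.mk (wfun h)), ⟨QuotientGroup.mk (wfun h),
          by rw [Set.mem_setOf_eq, hEw], rfl⟩, by rw [hEw]⟩
      exact Set.Infinite.of_image E (Set.Infinite.of_image Prod.fst (hO.mono h2))
    have hpre : (Subtype.val ⁻¹' {v : Wreath G H X ⧸ L | (E v).2 = s0} : Set V').Infinite := by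
      refine Set.Infinite.preimage hEslice ?_
      intro v hv
      refine ⟨⟨v, fun hmem => ?_⟩, rfl⟩
      have := (hKmem _).mp (Finset.mem_coe.mp hmem)
      rw [hv] at this
      exact hs0 this.2
    refine hpre.mono ?_
    intro v hv
    exact hsliceC2 v hv
  -- an infinite component inside D
  have hexC1 : ∃ C1 : Γ'.ConnectedComponent,
      (C1.supp ∩ (Subtype.val ⁻¹' Dset : Set V')).Infinite := by
    have hD'inf : (Subtype.val ⁻¹' Dset : Set V').Infinite :=
      Set.Infinite.preimage hDinf (fun v hv => ⟨⟨v, hDK v hv⟩, rfl⟩)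
    by_contra hall
    push_neg at hall
    have hsub : (Subtype.val ⁻¹' Dset : Set V') ⊆
        ⋃ C : Γ'.ConnectedComponent, (C.supp ∩ (Subtype.val ⁻¹' Dset : Set V')) := by
      intro v hv
      exact Set.mem_iUnion.mpr ⟨Γ'.connectedComponentMk v, rfl, hv⟩
    exact (Set.finite_iUnion hall).not_infinite (hD'inf.mono hsub)
  obtain ⟨C1, hC1'⟩ := hexC1
  have hC1inf : C1.supp.Infinite := hC1'.mono Set.inter_subset_left
  have hC1C2 : C1 ≠ C2 := by
    intro heq
    obtain ⟨d, hd1, hd2⟩ := hC1'.nonempty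
    have hreach : Γ'.Reachable d ⟨QuotientGroup.mk (wfun 1), hwV' 1⟩ := by
      have : Γ'.connectedComponentMk d = C2 := by rw [← heq]; exact hd1
      exact (SimpleGraph.ConnectedComponent.eq).mp this
    have hbase := reach_closed Γ' hDadj hreach hd2
    have : (E (QuotientGroup.mk (wfun 1))).2 = 1 := hbase.1
    rw [hEw] at this
    exact hs0 this
  -- conclude
  have h2lt : 1 < {C : Γ'.ConnectedComponent | C.supp.Infinite}.encard :=
    Set.one_lt_encard_iff.mpr ⟨C1, C2, hC1inf, hC2inf, hC1C2⟩
  have hle : {C : Γ'.ConnectedComponent | C.supp.Infinite}.encard ≤ numEnds Γ :=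
    le_iSup (fun K : Finset (Wreath G H X ⧸ L) =>
      {C : (SimpleGraph.induce ((↑K : Set (Wreath G H X ⧸ L))ᶜ) Γ).ConnectedComponent |
        C.supp.Infinite}.encard) K
  exact absurd ((h2lt.trans_le hle).trans_le (hFW S hSsym L)) (lt_irrefl 1)
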